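/- If a linear order of the vertices of a graph contains no k+1 pairwise nested edges, then the edges can be partitioned into k queues, i.e., k sets each containing no two nested edges. (Heath–Rosenberg characterization of queue layouts via rainbows.) -/

import Mathlib

/-- Edges `e`, `f` (each given as an ordered pair with first endpoint smaller)
are nested (`f` inside `e`) if `e.1 < f.1` and `f.2 < e.2`. -/
def NestedPair {V : Type*} [LinearOrder V] (e f : V × V) : Prop :=
  e.1 < f.1 ∧ f.2 < e.2

/-- If a linear order of the vertices of a graph contains no `k+1` pairwise
nested edges, then the edges can be partitioned into `k` queues. -/
theorem stmt1 {V : Type*} [LinearOrder V] (k : ℕ) (E : Finset (V × V))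
    (hE : ∀ e ∈ E, e.1 < e.2)
    (h : ¬ ∃ S : Finset (V × V), S ⊆ E ∧ S.card = k + 1 ∧
      ∀ e ∈ S, ∀ f ∈ S, e ≠ f → NestedPair e f ∨ NestedPair f e) :
    ∃ q : V × V → ℕ, (∀ e ∈ E, q e < k) ∧
      ∀ e ∈ E, ∀ f ∈ E, q e = q f → ¬ NestedPair e f := by
  classical
  -- chains in E with e outermost
  set C : V × V → Finset (Finset (V × V)) := fun e =>
    E.powerset.filter (fun S => e ∈ S ∧ (∀ f ∈ S, f ≠ e → NestedPair e f) ∧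
      ∀ f ∈ S, ∀ g ∈ S, f ≠ g → NestedPair f g ∨ NestedPair g f) with hC
  set m : V × V → ℕ := fun e => (C e).sup Finset.card with hm
  have hcard : ∀ S ⊆ E, (∀ f ∈ S, ∀ g ∈ S, f ≠ g → NestedPair f g ∨ NestedPair g f) →
      S.card ≤ k := by
    intro S hS hpw
    by_contra hc
    push_neg at hc
    obtain ⟨T, hTS, hTcard⟩ := Finset.exists_subset_card_eq (by omega : k + 1 ≤ S.card)
    exact h ⟨T, hTS.trans hS, hTcard,
      fun e he f hf hne => hpw e (hTS he) f (hTS hf) hne⟩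
  have hsup_le : ∀ e, m e ≤ k := by
    intro e
    refine Finset.sup_le fun S hS => ?_
    simp only [hC, Finset.mem_filter, Finset.mem_powerset] at hS
    exact hcard S hS.1 hS.2.2.2
  have hsup_ge : ∀ e ∈ E, 1 ≤ m e := by
    intro e he
    have hmem : ({e} : Finset (V × V)) ∈ C e := by
      simp only [hC, Finset.mem_filter, Finset.mem_powerset]
      refine ⟨by simpa using he, by simp, fun f hf hne => (hne (by simpa using hf)).elim, ?_⟩
      intro f hf g hg hne
      simp only [Finset.mem_singleton] at hf hg
      exact (hne (hf.trans hg.symm)).elim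
    have := Finset.le_sup (f := Finset.card) hmem
    simp only [Finset.card_singleton] at this
    exact this
  have hstep : ∀ e ∈ E, ∀ f ∈ E, NestedPair e f → m f + 1 ≤ m e := by
    intro e he f hf hef
    have hne : (C f).Nonempty := by
      refine ⟨{f}, ?_⟩
      simp only [hC, Finset.mem_filter, Finset.mem_powerset]
      refine ⟨by simpa using hf, by simp, fun g hg hne => (hne (by simpa using hg)).elim, ?_⟩
      intro a ha b hb hab
      simp only [Finset.mem_singleton] at ha hb
      exact (hab (ha.trans hb.symm)).elim
    obtain ⟨S, hS, hScard⟩ := Finset.exists_mem_eq_sup (C f) hne Finset.card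
    simp only [hC, Finset.mem_filter, Finset.mem_powerset] at hS
    obtain ⟨hSE, hfS, hout, hpw⟩ := hS
    -- everything in S is nested inside e
    have hnest : ∀ g ∈ S, NestedPair e g := by
      intro g hg
      rcases eq_or_ne g f with rfl | hgf
      · exact hef
      · obtain ⟨h1, h2⟩ := hout g hg hgf
        exact ⟨hef.1.trans h1, h2.trans hef.2⟩
    have heS : e ∉ S := by
      intro heS
      exact absurd (hnest e heS).1 (lt_irrefl _)
    have hmem : insert e S ∈ C e := by
      simp only [hC, Finset.mem_filter, Finset.mem_powerset]
      refine ⟨Finset.insert_subset he hSE, Finset.mem_insert_self _ _, ?_, ?_⟩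
      · intro g hg hge
        rcases Finset.mem_insert.mp hg with rfl | hg'
        · exact (hge rfl).elim
        · exact hnest g hg'
      · intro a ha b hb hab
        rcases Finset.mem_insert.mp ha with rfl | ha' <;>
          rcases Finset.mem_insert.mp hb with rfl | hb'
        · exact (hab rfl).elim
        · exact Or.inl (hnest b hb')
        · exact Or.inr (hnest a ha')
        · exact hpw a ha' b hb' hab
    have := Finset.le_sup (f := Finset.card) hmem
    rw [Finset.card_insert_of_notMem heS] at this
    show (C f).sup Finset.card + 1 ≤ (C e).sup Finset.card
    rw [hScard]
    exact this
  refine ⟨fun e => m e - 1, ?_, ?_⟩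
  · intro e he
    have h1 := hsup_le e
    have h2 := hsup_ge e he
    show m e - 1 < k
    omega
  · intro e he f hf hq hef
    have h1 := hstep e he f hf hef
    have h2 := hsup_ge f hf
    have hq' : m e - 1 = m f - 1 := hq
    omega
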